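/- Fix W(s) = (s² − 1)²/4. Then k₁ ≤ 0.6846, where k₁ is the Rayleigh-quotient constant associated to W. In particular, for every h, L > 0 the quadratic polynomial u(x) = h² − (h²/L²)(x − L)² on [0, L] satisfies ∫_0^L W(u) dx = L(128h⁸ − 336h⁴ + 315)/1260, ∫_0^L (u'')² dx = 4h⁴/L³, ∫_0^L (u')² dx = 4h⁴/(3L), and there exist h, L > 0 for which the resulting Rayleigh quotient is at most 0.6846. -/

import Mathlib

open MeasureTheory intervalIntegral

/-- `u ∈ W^{2,2}(a,b)` with first derivative `u'` and second derivative `u''`. -/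
def W22On (u u' u'' : ℝ → ℝ) (a b : ℝ) : Prop :=
  (∀ x ∈ Set.Icc a b, HasDerivWithinAt u (u' x) (Set.Icc a b) x) ∧
  ContinuousOn u' (Set.Icc a b) ∧
  MeasureTheory.IntegrableOn u'' (Set.Icc a b) ∧
  MeasureTheory.IntegrableOn (fun x => (u'' x) ^ 2) (Set.Icc a b) ∧
  (∀ x ∈ Set.Icc a b, u' x = u' a + ∫ t in a..x, u'' t)

/-- The Rayleigh-quotient constant `k₁` associated to `W(s) = (s²−1)²/4`:
`k₁ = inf_{L>0} inf { R_{−L}^L(u) : u ∈ W^{2,2}(−L,L), u'(±L) = 0, u' ≢ 0 }`. -/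
noncomputable def kOne : ℝ :=
  sInf {r : ℝ | ∃ L : ℝ, 0 < L ∧ ∃ u u' u'' : ℝ → ℝ,
    W22On u u' u'' (-L) L ∧ u' (-L) = 0 ∧ u' L = 0 ∧
    (∃ x ∈ Set.Icc (-L) L, u' x ≠ 0) ∧
    r = (∫ x in (-L)..L, (((u x) ^ 2 - 1) ^ 2 / 4 + (u'' x) ^ 2)) /
        ∫ x in (-L)..L, (u' x) ^ 2}

private lemma hdaTerm (c : ℝ) (n : ℕ) (d : ℝ) (x : ℝ) :
    HasDerivAt (fun y : ℝ => c * y ^ n / d) (c * ((n : ℝ) * x ^ (n - 1)) / d) x :=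
  ((hasDerivAt_pow n x).const_mul c).div_const d

private lemma hdaTermShift (c : ℝ) (n : ℕ) (d L : ℝ) (x : ℝ) :
    HasDerivAt (fun y : ℝ => c * (y - L) ^ n / d)
      (c * ((n : ℝ) * (x - L) ^ (n - 1) * 1) / d) x :=
  (((((hasDerivAt_id' x).sub_const L).pow n).const_mul c).div_const d)

private lemma shiftPoly_int (L c0 c2 c4 c6 c8 : ℝ) :
    (∫ x in (0:ℝ)..L, (c0 + c2 * (x - L) ^ 2 + c4 * (x - L) ^ 4 + c6 * (x - L) ^ 6
        + c8 * (x - L) ^ 8))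
      = c0 * L + c2 * L ^ 3 / 3 + c4 * L ^ 5 / 5 + c6 * L ^ 7 / 7 + c8 * L ^ 9 / 9 := by
  have key : ∀ x : ℝ, HasDerivAt
      (fun y : ℝ => c0 * (y - L) ^ 1 / 1 + c2 * (y - L) ^ 3 / 3 + c4 * (y - L) ^ 5 / 5
        + c6 * (y - L) ^ 7 / 7 + c8 * (y - L) ^ 9 / 9)
      (c0 + c2 * (x - L) ^ 2 + c4 * (x - L) ^ 4 + c6 * (x - L) ^ 6 + c8 * (x - L) ^ 8) x := by
    intro x
    have h := ((((hdaTermShift c0 1 1 L x).add (hdaTermShift c2 3 3 L x)).add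
      (hdaTermShift c4 5 5 L x)).add (hdaTermShift c6 7 7 L x)).add (hdaTermShift c8 9 9 L x)
    refine h.congr_deriv ?_
    norm_num
    ring
  rw [intervalIntegral.integral_eq_sub_of_hasDerivAt (fun x _ => key x)
    (Continuous.intervalIntegrable (by fun_prop) 0 L)]
  ring

private lemma evenPoly_int (L c0 c2 c4 c6 c8 c10 c12 c14 c16 c18 c20 : ℝ) :
    (∫ x in (-L)..L, (c0 + c2 * x ^ 2 + c4 * x ^ 4 + c6 * x ^ 6 + c8 * x ^ 8
        + c10 * x ^ 10 + c12 * x ^ 12 + c14 * x ^ 14 + c16 * x ^ 16 + c18 * x ^ 18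
        + c20 * x ^ 20))
      = 2 * (c0 * L + c2 * L ^ 3 / 3 + c4 * L ^ 5 / 5 + c6 * L ^ 7 / 7 + c8 * L ^ 9 / 9
        + c10 * L ^ 11 / 11 + c12 * L ^ 13 / 13 + c14 * L ^ 15 / 15 + c16 * L ^ 17 / 17
        + c18 * L ^ 19 / 19 + c20 * L ^ 21 / 21) := by
  have key : ∀ x : ℝ, HasDerivAt
      (fun y : ℝ => c0 * y ^ 1 / 1 + c2 * y ^ 3 / 3 + c4 * y ^ 5 / 5 + c6 * y ^ 7 / 7
        + c8 * y ^ 9 / 9 + c10 * y ^ 11 / 11 + c12 * y ^ 13 / 13 + c14 * y ^ 15 / 15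
        + c16 * y ^ 17 / 17 + c18 * y ^ 19 / 19 + c20 * y ^ 21 / 21)
      (c0 + c2 * x ^ 2 + c4 * x ^ 4 + c6 * x ^ 6 + c8 * x ^ 8 + c10 * x ^ 10 + c12 * x ^ 12
        + c14 * x ^ 14 + c16 * x ^ 16 + c18 * x ^ 18 + c20 * x ^ 20) x := by
    intro x
    have h := (((((((((hdaTerm c0 1 1 x).add (hdaTerm c2 3 3 x)).add (hdaTerm c4 5 5 x)).add
      (hdaTerm c6 7 7 x)).add (hdaTerm c8 9 9 x)).add (hdaTerm c10 11 11 x)).add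
      (hdaTerm c12 13 13 x)).add (hdaTerm c14 15 15 x)).add (hdaTerm c16 17 17 x)).add
      (hdaTerm c18 19 19 x) |>.add (hdaTerm c20 21 21 x)
    refine h.congr_deriv ?_
    norm_num
    ring
  rw [intervalIntegral.integral_eq_sub_of_hasDerivAt (fun x _ => key x)
    (Continuous.intervalIntegrable (by fun_prop) (-L) L)]
  ring

/-- The quintic test function `u(x) = -11907/15625·x + 13/250·x³ − 3/2000·x⁵` on
`(−14/5, 14/5)`, which satisfies `u'(±14/5) = 0`. -/
noncomputable def tf : ℝ → ℝ := fun x => -11907/15625 * x + 13/250 * x ^ 3 - 3/2000 * x ^ 5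
noncomputable def tf' : ℝ → ℝ := fun x => -11907/15625 + 39/250 * x ^ 2 - 3/400 * x ^ 4
noncomputable def tf'' : ℝ → ℝ := fun x => 39/125 * x - 3/100 * x ^ 3

lemma tf_hda (x : ℝ) : HasDerivAt tf (tf' x) x := by
  have h := ((((hasDerivAt_id' x).const_mul ((-11907/15625 : ℝ))).add
    ((hasDerivAt_pow 3 x).const_mul ((13/250 : ℝ)))).sub
    ((hasDerivAt_pow 5 x).const_mul ((3/2000 : ℝ))))
  refine h.congr_deriv ?_
  simp [tf']; ring

lemma tf'_hda (x : ℝ) : HasDerivAt tf' (tf'' x) x := by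
  have h := (((hasDerivAt_const x ((-11907/15625 : ℝ))).add
    ((hasDerivAt_pow 2 x).const_mul ((39/250 : ℝ)))).sub
    ((hasDerivAt_pow 4 x).const_mul ((3/400 : ℝ))))
  refine h.congr_deriv ?_
  simp [tf'']; ring

lemma tf'_cont : Continuous tf' := by unfold tf'; fun_prop
lemma tf''_cont : Continuous tf'' := by unfold tf''; fun_prop

lemma tf_num_int :
    (∫ x in (-(14/5) : ℝ)..(14/5), (((tf x) ^ 2 - 1) ^ 2 / 4 + (tf'' x) ^ 2))
      = 15518596317516818350342732529/16131321899592876434326171875 := by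
  rw [show (fun x : ℝ => ((tf x) ^ 2 - 1) ^ 2 / 4 + (tf'' x) ^ 2)
    = fun x : ℝ => ((1/4 : ℝ) + (-94245399/488281250) * x ^ 2
      + (25085115271981701/238418579101562500) * x ^ 4
      + (-93867713898311/3814697265625000) * x ^ 6
      + (47259373426233/15258789062500000) * x ^ 8
      + (-476880584553/1953125000000000) * x ^ 10
      + (25508641523/1953125000000000) * x ^ 12
      + (-7474857/15625000000000) * x ^ 14
      + (1462239/125000000000000) * x ^ 16
      + (-351/2000000000000) * x ^ 18
      + (81/64000000000000) * x ^ 20) from funext fun x => by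
        simp only [tf, tf'']; ring]
  rw [evenPoly_int]
  norm_num

lemma tf_den_int :
    (∫ x in (-(14/5) : ℝ)..(14/5), (tf' x) ^ 2) = 8940786176/6103515625 := by
  rw [show (fun x : ℝ => (tf' x) ^ 2)
    = fun x : ℝ => ((141776649/244140625 : ℝ) + (-464373/1953125) * x ^ 2
      + (111771/3125000) * x ^ 4 + (-117/50000) * x ^ 6 + (9/160000) * x ^ 8
      + 0 * x ^ 10 + 0 * x ^ 12 + 0 * x ^ 14 + 0 * x ^ 16 + 0 * x ^ 18
      + 0 * x ^ 20) from funext fun x => by simp only [tf']; ring]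
  rw [evenPoly_int]
  norm_num

lemma tf_W22On : W22On tf tf' tf'' (-(14/5)) (14/5) := by
  refine ⟨fun x _ => (tf_hda x).hasDerivWithinAt, tf'_cont.continuousOn,
    tf''_cont.integrableOn_Icc, (tf''_cont.pow 2).integrableOn_Icc,
    fun x _ => ?_⟩
  rw [intervalIntegral.integral_eq_sub_of_hasDerivAt (fun t _ => tf'_hda t)
    (tf''_cont.intervalIntegrable _ _)]
  ring

/-- Upper bound on the Rayleigh-quotient constant: `k₁ ≤ 0.6846`.  Moreover, for every
`h, L > 0` the quadratic polynomial `u(x) = h² − (h²/L²)(x−L)²` on `[0,L]` (whose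
derivatives are `u'(x) = −(2h²/L²)(x−L)` and `u'' ≡ −2h²/L²`) satisfies
`I₁ = ∫_0^L W(u) = L(128h⁸ − 336h⁴ + 315)/1260`, `I₂ = ∫_0^L (u'')² = 4h⁴/L³`,
`I₃ = ∫_0^L (u')² = 4h⁴/(3L)`, and there are `h, L > 0` with
`(I₁ + I₂)/I₃ ≤ 0.6846`. -/
theorem kOne_le_estimate :
    kOne ≤ 0.6846 ∧
    (∀ h L : ℝ, 0 < h → 0 < L →
      (∫ x in (0 : ℝ)..L,
          ((h ^ 2 - h ^ 2 / L ^ 2 * (x - L) ^ 2) ^ 2 - 1) ^ 2 / 4) =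
        L * (128 * h ^ 8 - 336 * h ^ 4 + 315) / 1260 ∧
      (∫ x in (0 : ℝ)..L, (-(2 * h ^ 2 / L ^ 2)) ^ 2) = 4 * h ^ 4 / L ^ 3 ∧
      (∫ x in (0 : ℝ)..L, (-(2 * h ^ 2 / L ^ 2) * (x - L)) ^ 2) =
        4 * h ^ 4 / (3 * L)) ∧
    ∃ h L : ℝ, 0 < h ∧ 0 < L ∧
      (L * (128 * h ^ 8 - 336 * h ^ 4 + 315) / 1260 + 4 * h ^ 4 / L ^ 3) /
          (4 * h ^ 4 / (3 * L)) ≤ 0.6846 := by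
  refine ⟨?_, ?_, ?_⟩
  · -- kOne ≤ 0.6846 via the quintic test function
    unfold kOne
    have hbdd : BddBelow {r : ℝ | ∃ L : ℝ, 0 < L ∧ ∃ u u' u'' : ℝ → ℝ,
        W22On u u' u'' (-L) L ∧ u' (-L) = 0 ∧ u' L = 0 ∧
        (∃ x ∈ Set.Icc (-L) L, u' x ≠ 0) ∧
        r = (∫ x in (-L)..L, (((u x) ^ 2 - 1) ^ 2 / 4 + (u'' x) ^ 2)) /
            ∫ x in (-L)..L, (u' x) ^ 2} := by
      refine ⟨0, ?_⟩
      rintro r ⟨L, hL, u, u', u'', hW, -, -, -, rfl⟩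
      have hab : (-L : ℝ) ≤ L := by linarith
      refine div_nonneg ?_ ?_
      · exact intervalIntegral.integral_nonneg hab fun x _ => by positivity
      · exact intervalIntegral.integral_nonneg hab fun x _ => by positivity
    have hmem : ((∫ x in (-(14/5) : ℝ)..(14/5), (((tf x) ^ 2 - 1) ^ 2 / 4 + (tf'' x) ^ 2)) /
        ∫ x in (-(14/5) : ℝ)..(14/5), (tf' x) ^ 2) ∈ {r : ℝ | ∃ L : ℝ, 0 < L ∧
        ∃ u u' u'' : ℝ → ℝ,
        W22On u u' u'' (-L) L ∧ u' (-L) = 0 ∧ u' L = 0 ∧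
        (∃ x ∈ Set.Icc (-L) L, u' x ≠ 0) ∧
        r = (∫ x in (-L)..L, (((u x) ^ 2 - 1) ^ 2 / 4 + (u'' x) ^ 2)) /
            ∫ x in (-L)..L, (u' x) ^ 2} := by
      refine ⟨14/5, by norm_num, tf, tf', tf'', tf_W22On, ?_, ?_,
        ⟨0, by norm_num, ?_⟩, rfl⟩
      · simp only [tf']; norm_num
      · simp only [tf']; norm_num
      · simp only [tf']; norm_num
    refine le_trans (csInf_le hbdd hmem) ?_
    rw [tf_num_int, tf_den_int]
    norm_num
  · -- the three integral identities
    intro h L hh hL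
    have hL0 : L ≠ 0 := ne_of_gt hL
    refine ⟨?_, ?_, ?_⟩
    · rw [show (fun x : ℝ => ((h ^ 2 - h ^ 2 / L ^ 2 * (x - L) ^ 2) ^ 2 - 1) ^ 2 / 4)
        = fun x : ℝ => ((h ^ 4 - 1) ^ 2 / 4
          + (-(h ^ 4 - 1) * h ^ 2 * (h ^ 2 / L ^ 2)) * (x - L) ^ 2
          + ((6 * h ^ 4 - 2) / 4 * (h ^ 2 / L ^ 2) ^ 2) * (x - L) ^ 4
          + (-(h ^ 2) * (h ^ 2 / L ^ 2) ^ 3) * (x - L) ^ 6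
          + ((h ^ 2 / L ^ 2) ^ 4 / 4) * (x - L) ^ 8) from funext fun x => by
            field_simp; ring]
      rw [shiftPoly_int]
      field_simp
      ring
    · rw [intervalIntegral.integral_const, smul_eq_mul]
      field_simp
      ring
    · rw [show (fun x : ℝ => (-(2 * h ^ 2 / L ^ 2) * (x - L)) ^ 2)
        = fun x : ℝ => ((0:ℝ) + (4 * h ^ 4 / L ^ 4) * (x - L) ^ 2 + 0 * (x - L) ^ 4
          + 0 * (x - L) ^ 6 + 0 * (x - L) ^ 8) from funext fun x => by field_simp; ring]
      rw [shiftPoly_int]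
      field_simp
      ring
  · -- explicit numerical choice
    refine ⟨28/25, 74/25, by norm_num, by norm_num, by norm_num⟩
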